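/- arXiv:2506.20054 — 3 statements merged into one kernel-verified Lean document; each statement's English description precedes it below -/
import Mathlib

section
/- Let $\lambda, L > 0$ with $4L \le \lambda \le 1$. Let $u, v$ be vectors in $\mathbb{R}^n$ with $\|u\|_2 \le 1$ and $\|v\|_2 \le 1$, and let $x \in \mathbb{R}^n$ satisfy $|\langle x, u\rangle| \le \lambda/2$ and $|\langle x, u - v\rangle| \ge L \|u - v\|_2$. Then $|\Phi_\lambda(\langle x,u\rangle) - \Phi_\lambda(\langle x,v\rangle)| \ge L \|u-v\|_2$. -/
noncomputable def clip (lam x : ℝ) : ℝ := max (-lam) (min x lam)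

theorem clip_lemma (n : ℕ) (lam L : ℝ) (hL : 0 < L) (h4L : 4 * L ≤ lam) (hlam : lam ≤ 1)
    (u v x : EuclideanSpace ℝ (Fin n)) (hu : ‖u‖ ≤ 1) (hv : ‖v‖ ≤ 1)
    (hxu : |(inner ℝ x u : ℝ)| ≤ lam / 2)
    (hxuv : |(inner ℝ x (u - v) : ℝ)| ≥ L * ‖u - v‖) :
    |clip lam (inner ℝ x u : ℝ) - clip lam (inner ℝ x v : ℝ)| ≥ L * ‖u - v‖ := by
  set a : ℝ := inner ℝ x u with ha
  set b : ℝ := inner ℝ x v with hb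
  have hlam0 : 0 < lam := lt_of_lt_of_le (by linarith) h4L
  have habs := abs_le.mp hxu
  have hca : clip lam a = a := by
    unfold clip
    rw [min_eq_left (by linarith), max_eq_right (by linarith)]
  have hsub : (inner ℝ x (u - v) : ℝ) = a - b := by
    rw [inner_sub_right]
  have huv2 : ‖u - v‖ ≤ 2 := by
    calc ‖u - v‖ ≤ ‖u‖ + ‖v‖ := norm_sub_le u v
    _ ≤ 2 := by linarith
  have hLuv : L * ‖u - v‖ ≤ 2 * L := by nlinarith
  rw [hsub] at hxuv
  rw [hca]
  unfold clip
  rcases le_or_gt b lam with h1 | h1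
  · rcases le_or_gt (-lam) b with h2 | h2
    · rw [min_eq_left h1, max_eq_right h2]
      exact hxuv
    · rw [min_eq_left h1, max_eq_left (le_of_lt h2)]
      rw [abs_sub_comm, abs_of_nonpos (by linarith)]
      calc L * ‖u - v‖ ≤ 2 * L := hLuv
      _ ≤ -(-lam - a) := by linarith
  · rw [min_eq_right (le_of_lt h1), max_eq_right (by linarith)]
    rw [abs_of_nonpos (by linarith)]
    calc L * ‖u - v‖ ≤ 2 * L := hLuv
    _ ≤ -(a - lam) := by linarith
end

section
/- Let $\lambda > 0$, $0 < a < 1/4$, and define $\Omega_a = \bigcup_{m \in \mathbb{Z}} [(a + 2m)\lambda, (1 - a + 2m)\lambda]$. If $s, t$ are real numbers with $s - t \in \Omega_a$, then $|\mathcal{M}_\lambda(s) - \mathcal{M}_\lambda(t)| \ge a\lambda$. -/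
noncomputable def fold (lam s : ℝ) : ℝ :=
  2 * lam * (s / (2 * lam) + 1 / 2 - ⌊s / (2 * lam) + 1 / 2⌋ - 1 / 2)

theorem fold_omega_lower (lam a : ℝ) (hlam : 0 < lam) (ha : 0 < a) (ha' : a < 1 / 4)
    (s t : ℝ)
    (hst : s - t ∈ ⋃ m : ℤ, Set.Icc ((a + 2 * m) * lam) ((1 - a + 2 * m) * lam)) :
    |fold lam s - fold lam t| ≥ a * lam := by
  simp only [Set.mem_iUnion, Set.mem_Icc] at hst
  obtain ⟨m, h1, h2⟩ := hst
  set ks := ⌊s / (2 * lam) + 1 / 2⌋ with hks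
  set kt := ⌊t / (2 * lam) + 1 / 2⌋ with hkt
  have hD : fold lam s - fold lam t = (s - t) - 2 * lam * (ks - kt) := by
    unfold fold
    rw [← hks, ← hkt]
    field_simp
    ring
  set n : ℤ := m - ks + kt with hn
  have hn1 : (a + 2 * n) * lam ≤ fold lam s - fold lam t := by
    rw [hD]
    push_cast [hn]
    nlinarith [h1]
  have hn2 : fold lam s - fold lam t ≤ (1 - a + 2 * n) * lam := by
    rw [hD]
    push_cast [hn]
    nlinarith [h2]
  rcases le_or_gt 0 n with hpos | hneg
  · have : (0:ℝ) ≤ n := by exact_mod_cast hpos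
    rw [ge_iff_le, le_abs]
    left
    nlinarith
  · have hle : n ≤ -1 := by omega
    have : (n:ℝ) ≤ -1 := by exact_mod_cast hle
    rw [ge_iff_le, le_abs]
    right
    nlinarith
end

section
/- Let $\lambda > 0$, $m, n \ge 1$, let $x_1, \dots, x_m \in \mathbb{R}^n$, and let $u \in \mathbb{R}^n$ be a unit vector. Then $\lim_{\varepsilon \to 0^+} \frac{1}{m} \sum_{j=1}^m \frac{|\Phi_\lambda(\langle u, x_j\rangle) - \Phi_\lambda(\langle (1-\varepsilon)u, x_j\rangle)|^2}{\|u - (1-\varepsilon)u\|_2^2} = \frac{1}{m} \sum_{j : |\langle u, x_j\rangle| \le \lambda} |\langle u, x_j\rangle|^2$. -/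
open Filter

lemma clip_of_abs_le {lam x : ℝ} (h : |x| ≤ lam) : clip lam x = x := by
  rw [abs_le] at h
  unfold clip
  rw [min_eq_left h.2, max_eq_right h.1]

lemma clip_of_le {lam x : ℝ} (hlam : 0 < lam) (h : lam ≤ x) : clip lam x = lam := by
  unfold clip
  rw [min_eq_right h, max_eq_right (by linarith)]

lemma clip_of_ge {lam x : ℝ} (hlam : 0 < lam) (h : x ≤ -lam) : clip lam x = -lam := by
  unfold clip
  rw [min_eq_left (by linarith), max_eq_left h]

theorem clip_ray_limit (lam : ℝ) (hlam : 0 < lam) (m n : ℕ) (hm : 1 ≤ m) (hn : 1 ≤ n)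
    (x : Fin m → EuclideanSpace ℝ (Fin n)) (u : EuclideanSpace ℝ (Fin n)) (hu : ‖u‖ = 1) :
    Tendsto (fun ε : ℝ =>
        (1 / m : ℝ) * ∑ j, |clip lam (inner ℝ u (x j) : ℝ) -
          clip lam (inner ℝ ((1 - ε) • u) (x j) : ℝ)| ^ 2 / ‖u - (1 - ε) • u‖ ^ 2)
      (nhdsWithin 0 (Set.Ioi 0))
      (nhds ((1 / m : ℝ) * ∑ j,
        if |(inner ℝ u (x j) : ℝ)| ≤ lam then (inner ℝ u (x j) : ℝ) ^ 2 else 0)) := by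
  set a : Fin m → ℝ := fun j => (inner ℝ u (x j) : ℝ) with ha
  have hinner : ∀ (ε : ℝ) (j : Fin m), (inner ℝ ((1 - ε) • u) (x j) : ℝ) = (1 - ε) * a j := by
    intro ε j
    exact real_inner_smul_left u (x j) (1 - ε)
  have hnorm : ∀ ε : ℝ, 0 < ε → ‖u - (1 - ε) • u‖ = ε := by
    intro ε hε
    have h1 : u - (1 - ε) • u = ε • u := by
      rw [sub_smul, one_smul, sub_sub_cancel]
    rw [h1, norm_smul, hu, mul_one, Real.norm_eq_abs, abs_of_pos hε]
  have hev : ∀ j : Fin m, ∀ᶠ ε in nhdsWithin (0:ℝ) (Set.Ioi 0),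
      |clip lam (a j) - clip lam ((1 - ε) * a j)| ^ 2 / ε ^ 2
        = (if |a j| ≤ lam then (a j) ^ 2 else 0) := by
    intro j
    by_cases h : |a j| ≤ lam
    · filter_upwards [self_mem_nhdsWithin,
        nhdsWithin_le_nhds (gt_mem_nhds (one_pos : (0:ℝ) < 1))] with ε hε0 hε1
      simp only [Set.mem_Ioi] at hε0
      have h2 : |(1 - ε) * a j| ≤ lam := by
        rw [abs_mul]
        calc |1 - ε| * |a j| ≤ 1 * |a j| := by
              apply mul_le_mul_of_nonneg_right _ (abs_nonneg _)
              rw [abs_le]; constructor <;> linarith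
          _ ≤ lam := by rw [one_mul]; exact h
      rw [clip_of_abs_le h, clip_of_abs_le h2, if_pos h]
      have h3 : a j - (1 - ε) * a j = ε * a j := by ring
      rw [h3, abs_mul, mul_pow, sq_abs, sq_abs, mul_comm, mul_div_assoc,
        div_self (pow_ne_zero 2 hε0.ne'), mul_one]
    · push_neg at h
      have hane : a j ≠ 0 := by
        intro h0; rw [h0, abs_zero] at h; linarith
      have hδ : 0 < 1 - lam / |a j| := by
        have : lam / |a j| < 1 := (div_lt_one (abs_pos.2 hane)).2 h
        linarith
      filter_upwards [self_mem_nhdsWithin,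
        nhdsWithin_le_nhds (gt_mem_nhds hδ)] with ε hε0 hεδ
      simp only [Set.mem_Ioi] at hε0
      have hkey : lam ≤ (1 - ε) * |a j| := by
        have h1 : lam / |a j| < 1 - ε := by linarith
        have := (div_lt_iff₀ (abs_pos.2 hane)).1 h1
        linarith
      have heq : clip lam (a j) = clip lam ((1 - ε) * a j) := by
        rcases lt_or_gt_of_ne hane with hneg | hpos
        · rw [abs_of_neg hneg] at h hkey
          rw [clip_of_ge hlam (by linarith), clip_of_ge hlam (by nlinarith)]
        · rw [abs_of_pos hpos] at h hkey
          rw [clip_of_le hlam (by linarith), clip_of_le hlam (by nlinarith)]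
      rw [if_neg (not_le.2 h), heq, sub_self, abs_zero, zero_pow (by norm_num),
        zero_div]
  refine Tendsto.congr' ?_ tendsto_const_nhds
  filter_upwards [Filter.eventually_all.2 hev, self_mem_nhdsWithin] with ε hε hε0
  simp only [Set.mem_Ioi] at hε0
  congr 1
  refine Finset.sum_congr rfl fun j _ => ?_
  rw [hinner ε j, hnorm ε hε0]; exact (hε j).symm
end
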